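/- arXiv:2201.07628 — 2 statements merged into one kernel-verified Lean document; each statement's English description precedes it below -/
import Mathlib

section
/- Heppes' theorem: Let Q be a discrete probability measure on ℝ^d supported on k points, and let H_1, …, H_{k+1} be linear subspaces of ℝ^d such that H_i^⊥ ∩ H_j^⊥ = {0} for all i ≠ j. If P is a Borel probability measure on ℝ^d with P_{H_i} = Q_{H_i} for each i = 1, …, k+1, then P = Q. -/
open MeasureTheory

/-- Total variation distance between two measures. -/
noncomputable def dTV {α : Type*} [MeasurableSpace α] (P Q : Measure α) : ℝ :=
  ⨆ A : {A : Set α // MeasurableSet A}, |(P A).toReal - (Q A).toReal|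

/-- The projection of a measure `P` on `ℝ^d` onto a subspace `H`:
the pushforward of `P` under the orthogonal projection onto `H`. -/
noncomputable def projMeasure {d : ℕ} (H : Submodule ℝ (EuclideanSpace ℝ (Fin d)))
    (P : Measure (EuclideanSpace ℝ (Fin d))) : Measure H :=
  P.map (H.orthogonalProjection)

/-- Heppes' theorem. -/
theorem stmt3 {d k : ℕ} (P Q : Measure (EuclideanSpace ℝ (Fin d)))
    [IsProbabilityMeasure P] [IsProbabilityMeasure Q]
    (S : Finset (EuclideanSpace ℝ (Fin d))) (hScard : S.card = k)
    (hQS : Q (↑S : Set (EuclideanSpace ℝ (Fin d)))ᶜ = 0)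
    (H : Fin (k + 1) → Submodule ℝ (EuclideanSpace ℝ (Fin d)))
    (hH : ∀ i j, i ≠ j → (H i)ᗮ ⊓ (H j)ᗮ = ⊥)
    (hproj : ∀ i, projMeasure (H i) P = projMeasure (H i) Q) :
    P = Q := by
  classical
  have hmeas : ∀ i, Measurable fun y : EuclideanSpace ℝ (Fin d) =>
      (H i).orthogonalProjection y :=
    fun i => ((H i).orthogonalProjection).continuous.measurable
  have hker : ∀ (i : Fin (k + 1)) (y x : EuclideanSpace ℝ (Fin d)),
      (H i).orthogonalProjection y = (H i).orthogonalProjection x ↔ y - x ∈ (H i)ᗮ := by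
    intro i y x
    constructor
    · intro h
      have h2 : (((H i).orthogonalProjection (y - x)) : EuclideanSpace ℝ (Fin d)) = 0 := by
        rw [map_sub, h, sub_self]; rfl
      have h3 : y - x - ((H i).orthogonalProjection (y - x) : EuclideanSpace ℝ (Fin d)) ∈ (H i)ᗮ :=
        Submodule.sub_starProjection_mem_orthogonal (K := H i) (y - x)
      rwa [h2, sub_zero] at h3
    · intro h
      have h1 : (H i).orthogonalProjection (y - x) = 0 :=
        Submodule.orthogonalProjectionOnto_apply_of_mem_orthogonal h
      rwa [map_sub, sub_eq_zero] at h1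
  -- the preimage sets
  set T : Fin (k + 1) → Set (EuclideanSpace ℝ (Fin d)) :=
    fun i => (fun y => (H i).orthogonalProjection y) ⁻¹'
      ((fun x => (H i).orthogonalProjection x) '' S) with hT
  have hPT : ∀ i, P (T i)ᶜ = 0 := by
    intro i
    have himg : MeasurableSet (((fun x => (H i).orthogonalProjection x) '' S)ᶜ) :=
      ((Set.Finite.image _ S.finite_toSet).measurableSet).compl
    have h1 : P (T i)ᶜ = projMeasure (H i) P
        (((fun x => (H i).orthogonalProjection x) '' S)ᶜ) := by
      rw [projMeasure, Measure.map_apply (hmeas i) himg]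
      rfl
    rw [h1, hproj i, projMeasure, Measure.map_apply (hmeas i) himg]
    refine measure_mono_null ?_ hQS
    intro y hy hyS
    exact hy (Set.mem_image_of_mem _ hyS)
  have hsub : (⋂ i, T i) ⊆ (↑S : Set (EuclideanSpace ℝ (Fin d))) := by
    intro y hy
    by_contra hyS
    have hch : ∀ i : Fin (k + 1), ∃ x : {x // x ∈ S},
        (H i).orthogonalProjection y =
          (H i).orthogonalProjection (x : EuclideanSpace ℝ (Fin d)) := by
      intro i
      obtain ⟨x, hxS, hx⟩ := Set.mem_iInter.1 hy i
      exact ⟨⟨x, hxS⟩, hx.symm⟩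
    choose f hf using hch
    have hcard : Fintype.card {x // x ∈ S} < Fintype.card (Fin (k + 1)) := by
      simp [Fintype.card_coe, hScard]
    obtain ⟨i, j, hij, hfij⟩ := Fintype.exists_ne_map_eq_of_card_lt f hcard
    have h1 : y - (f i : EuclideanSpace ℝ (Fin d)) ∈ (H i)ᗮ := (hker i y _).1 (hf i)
    have h2 : y - (f i : EuclideanSpace ℝ (Fin d)) ∈ (H j)ᗮ := by
      rw [hfij]; exact (hker j y _).1 (hf j)
    have hb : y - (f i : EuclideanSpace ℝ (Fin d)) ∈ (H i)ᗮ ⊓ (H j)ᗮ := ⟨h1, h2⟩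
    rw [hH i j hij, Submodule.mem_bot, sub_eq_zero] at hb
    exact hyS (hb ▸ (f i).2)
  have hSmeas : MeasurableSet (↑S : Set (EuclideanSpace ℝ (Fin d))) :=
    S.finite_toSet.measurableSet
  have hPS : P (↑S : Set (EuclideanSpace ℝ (Fin d)))ᶜ = 0 := by
    refine measure_mono_null ?_ (measure_iUnion_null fun i => hPT i)
    intro y hy
    have : y ∉ ⋂ i, T i := fun h => hy (hsub h)
    simpa [Set.mem_iUnion, Set.mem_iInter] using this
  -- good index for each point of S
  have hgood : ∀ x ∈ S, ∃ i, ∀ x' ∈ S, x' ≠ x →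
      (H i).orthogonalProjection x' ≠ (H i).orthogonalProjection x := by
    intro x hxS
    by_contra hc
    push_neg at hc
    have hch : ∀ i : Fin (k + 1), ∃ z : {z // z ∈ S.erase x},
        (H i).orthogonalProjection (z : EuclideanSpace ℝ (Fin d)) =
          (H i).orthogonalProjection x := by
      intro i
      obtain ⟨x', hx'S, hne, heq⟩ := hc i
      exact ⟨⟨x', Finset.mem_erase.2 ⟨hne, hx'S⟩⟩, heq⟩
    choose g hg using hch
    have hcard : Fintype.card {z // z ∈ S.erase x} < Fintype.card (Fin (k + 1)) := by
      simp only [Fintype.card_coe, Fintype.card_fin]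
      calc (S.erase x).card ≤ S.card := Finset.card_erase_le
        _ < k + 1 := by omega
    obtain ⟨i, j, hij, hgij⟩ := Fintype.exists_ne_map_eq_of_card_lt g hcard
    have h1 : (g i : EuclideanSpace ℝ (Fin d)) - x ∈ (H i)ᗮ := (hker i _ x).1 (hg i)
    have h2 : (g i : EuclideanSpace ℝ (Fin d)) - x ∈ (H j)ᗮ := by
      rw [hgij]; exact (hker j _ x).1 (hg j)
    have hb : (g i : EuclideanSpace ℝ (Fin d)) - x ∈ (H i)ᗮ ⊓ (H j)ᗮ := ⟨h1, h2⟩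
    rw [hH i j hij, Submodule.mem_bot, sub_eq_zero] at hb
    exact (Finset.mem_erase.1 (g i).2).1 hb
  -- singleton measures agree
  have hsing : ∀ x ∈ S, P {x} = Q {x} := by
    intro x hxS
    obtain ⟨i, hi⟩ := hgood x hxS
    set pre : Set (EuclideanSpace ℝ (Fin d)) :=
      (fun y => (H i).orthogonalProjection y) ⁻¹' {(H i).orthogonalProjection x} with hpre
    have hpreS : pre ∩ ↑S = {x} := by
      ext z
      simp only [hpre, Set.mem_inter_iff, Set.mem_preimage, Set.mem_singleton_iff,
        Finset.mem_coe]
      constructor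
      · rintro ⟨hz, hzS⟩
        by_contra hne
        exact hi z hzS hne hz
      · rintro rfl
        exact ⟨rfl, hxS⟩
    have key : ∀ μ : Measure (EuclideanSpace ℝ (Fin d)),
        μ (↑S : Set (EuclideanSpace ℝ (Fin d)))ᶜ = 0 → μ pre = μ {x} := by
      intro μ hμ
      have hd : μ (pre \ ↑S) = 0 :=
        measure_mono_null (fun z hz => hz.2) hμ
      rw [← measure_inter_add_diff pre hSmeas, hd, add_zero, hpreS]
    have hmap : ∀ μ : Measure (EuclideanSpace ℝ (Fin d)),
        projMeasure (H i) μ {(H i).orthogonalProjection x} = μ pre := by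
      intro μ
      rw [projMeasure, Measure.map_apply (hmeas i) (measurableSet_singleton _)]
    calc P {x} = P pre := (key P hPS).symm
      _ = projMeasure (H i) P {(H i).orthogonalProjection x} := (hmap P).symm
      _ = projMeasure (H i) Q {(H i).orthogonalProjection x} := by rw [hproj i]
      _ = Q pre := hmap Q
      _ = Q {x} := key Q hQS
  -- finite sums of singletons
  have hfin : ∀ (μ : Measure (EuclideanSpace ℝ (Fin d)))
      (t : Finset (EuclideanSpace ℝ (Fin d))),
      μ (↑t : Set (EuclideanSpace ℝ (Fin d))) = ∑ x ∈ t, μ {x} := by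
    intro μ t
    have := measure_biUnion_finset (μ := μ) (s := t)
      (f := fun x => ({x} : Set (EuclideanSpace ℝ (Fin d)))) ?_ ?_
    · rw [show (⋃ b ∈ t, ({b} : Set (EuclideanSpace ℝ (Fin d)))) = ↑t by ext z; simp] at this
      exact this
    · intro x _ y _ hxy
      simp [Set.disjoint_singleton, hxy]
    · intro x _
      exact measurableSet_singleton x
  ext A hA
  have split : ∀ μ : Measure (EuclideanSpace ℝ (Fin d)),
      μ (↑S : Set (EuclideanSpace ℝ (Fin d)))ᶜ = 0 →
      μ A = ∑ x ∈ S.filter (· ∈ A), μ {x} := by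
    intro μ hμ
    have h1 : μ A = μ (A ∩ ↑S) := by
      have hd : μ (A \ ↑S) = 0 := measure_mono_null (fun z hz => hz.2) hμ
      rw [← measure_inter_add_diff A hSmeas, hd, add_zero]
    have h2 : A ∩ ↑S = ↑(S.filter (· ∈ A)) := by
      ext z
      simp [and_comm]
    rw [h1, h2, hfin]
  rw [split P hPS, split Q hQS]
  exact Finset.sum_congr rfl fun x hx => hsing x (Finset.mem_filter.1 hx).1
end

section
/- Let P and Q be Borel probability measures on ℝ^d both supported on a countable set E ⊂ ℝ^d, and let H be a linear subspace of ℝ^d with H^⊥ ∩ (E − E) = {0}. Then d_TV(P,Q) = d_TV(P_H, Q_H). In particular, if P_H = Q_H then P = Q. -/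
open MeasureTheory

open Pointwise

lemma key_set {d : ℕ} (E : Set (EuclideanSpace ℝ (Fin d)))
    (H : Submodule ℝ (EuclideanSpace ℝ (Fin d)))
    (hH : (Hᗮ : Set (EuclideanSpace ℝ (Fin d))) ∩ (E - E) ⊆ {0})
    (A : Set (EuclideanSpace ℝ (Fin d))) :
    (H.orthogonalProjection) ⁻¹' ((H.orthogonalProjection) '' (A ∩ E)) ∩ E = A ∩ E := by
  ext x
  constructor
  · rintro ⟨⟨y, hy, hxy⟩, hxE⟩
    have hmem : x - y ∈ (Hᗮ : Set (EuclideanSpace ℝ (Fin d))) ∩ (E - E) := by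
      constructor
      · rw [SetLike.mem_coe, ← Submodule.orthogonalProjectionOnto_eq_zero_iff, map_sub, hxy, sub_self]
      · exact Set.sub_mem_sub hxE hy.2
    have := hH hmem
    simp only [Set.mem_singleton_iff, sub_eq_zero] at this
    exact ⟨this ▸ hy.1, hxE⟩
  · rintro ⟨hA, hE⟩
    exact ⟨⟨x, ⟨hA, hE⟩, rfl⟩, hE⟩

lemma key_meas {d : ℕ} (P : Measure (EuclideanSpace ℝ (Fin d)))
    (E : Set (EuclideanSpace ℝ (Fin d))) (hPE : P Eᶜ = 0)
    (H : Submodule ℝ (EuclideanSpace ℝ (Fin d)))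
    (hH : (Hᗮ : Set (EuclideanSpace ℝ (Fin d))) ∩ (E - E) ⊆ {0})
    (A : Set (EuclideanSpace ℝ (Fin d))) :
    P ((H.orthogonalProjection) ⁻¹' ((H.orthogonalProjection) '' (A ∩ E))) = P A := by
  rw [← measure_inter_conull hPE, key_set E H hH A, measure_inter_conull hPE]

theorem stmt5 {d : ℕ} (P Q : Measure (EuclideanSpace ℝ (Fin d)))
    [IsProbabilityMeasure P] [IsProbabilityMeasure Q]
    (E : Set (EuclideanSpace ℝ (Fin d))) (hE : E.Countable)
    (hPE : P Eᶜ = 0) (hQE : Q Eᶜ = 0)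
    (H : Submodule ℝ (EuclideanSpace ℝ (Fin d)))
    (hH : (Hᗮ : Set (EuclideanSpace ℝ (Fin d))) ∩ (E - E) ⊆ {0}) :
    dTV P Q = dTV (projMeasure H P) (projMeasure H Q) ∧
      (projMeasure H P = projMeasure H Q → P = Q) := by
  set π := (H.orthogonalProjection : EuclideanSpace ℝ (Fin d) →L[ℝ] H)
  have hπ : Measurable π := π.continuous.measurable
  have hmapP : ∀ B : Set H, MeasurableSet B → projMeasure H P B = P (π ⁻¹' B) := fun B hB =>
    Measure.map_apply hπ hB
  have hmapQ : ∀ B : Set H, MeasurableSet B → projMeasure H Q B = Q (π ⁻¹' B) := fun B hB =>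
    Measure.map_apply hπ hB
  have hBmeas : ∀ A : Set (EuclideanSpace ℝ (Fin d)), MeasurableSet ((π '' (A ∩ E)) : Set H) := by
    intro A
    exact ((hE.mono Set.inter_subset_right).image π).measurableSet
  have bddP : BddAbove (Set.range fun A : {A : Set (EuclideanSpace ℝ (Fin d)) // MeasurableSet A} =>
      |(P A).toReal - (Q A).toReal|) := by
    refine ⟨2, ?_⟩
    rintro x ⟨A, rfl⟩
    have h1 : (P (A : Set _)).toReal ≤ 1 := by
      simpa using ENNReal.toReal_mono (by simp) (prob_le_one (μ := P) (s := A))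
    have h2 : (Q (A : Set _)).toReal ≤ 1 := by
      simpa using ENNReal.toReal_mono (by simp) (prob_le_one (μ := Q) (s := A))
    have := abs_sub_abs_le_abs_sub (P (A : Set _)).toReal (Q (A : Set _)).toReal
    rw [abs_sub_le_iff]
    constructor <;> nlinarith [ENNReal.toReal_nonneg (a := P (A : Set _)),
      ENNReal.toReal_nonneg (a := Q (A : Set _))]
  haveI : IsProbabilityMeasure (projMeasure H P) := Measure.isProbabilityMeasure_map hπ.aemeasurable
  haveI : IsProbabilityMeasure (projMeasure H Q) := Measure.isProbabilityMeasure_map hπ.aemeasurable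
  have bddH : BddAbove (Set.range fun B : {B : Set H // MeasurableSet B} =>
      |((projMeasure H P) B).toReal - ((projMeasure H Q) B).toReal|) := by
    refine ⟨2, ?_⟩
    rintro x ⟨B, rfl⟩
    have h1 : ((projMeasure H P) (B : Set H)).toReal ≤ 1 := by
      simpa using ENNReal.toReal_mono (by simp) (prob_le_one (μ := projMeasure H P) (s := B))
    have h2 : ((projMeasure H Q) (B : Set H)).toReal ≤ 1 := by
      simpa using ENNReal.toReal_mono (by simp) (prob_le_one (μ := projMeasure H Q) (s := B))
    rw [abs_sub_le_iff]
    constructor <;> nlinarith [ENNReal.toReal_nonneg (a := (projMeasure H P) (B : Set H)),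
      ENNReal.toReal_nonneg (a := (projMeasure H Q) (B : Set H))]
  constructor
  · apply le_antisymm
    · apply ciSup_le
      rintro ⟨A, hA⟩
      have hPB := key_meas P E hPE H hH A
      have hQB := key_meas Q E hQE H hH A
      have : |(P A).toReal - (Q A).toReal|
          = |((projMeasure H P) (π '' (A ∩ E))).toReal - ((projMeasure H Q) (π '' (A ∩ E))).toReal| := by
        rw [hmapP _ (hBmeas A), hmapQ _ (hBmeas A), hPB, hQB]
      rw [this]
      exact le_ciSup bddH ⟨π '' (A ∩ E), hBmeas A⟩
    · apply ciSup_le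
      rintro ⟨B, hB⟩
      have : |((projMeasure H P) B).toReal - ((projMeasure H Q) B).toReal|
          = |(P (π ⁻¹' B)).toReal - (Q (π ⁻¹' B)).toReal| := by
        rw [hmapP _ hB, hmapQ _ hB]
      rw [this]
      exact le_ciSup bddP ⟨π ⁻¹' B, hπ hB⟩
  · intro h
    ext A hA
    have hPB := key_meas P E hPE H hH A
    have hQB := key_meas Q E hQE H hH A
    rw [← hPB, ← hQB, ← hmapP _ (hBmeas A), ← hmapQ _ (hBmeas A), h]
end
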